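/- Let G be a totally ordered abelian group, μ a finite subset of {g < 1}, and A, B, S nonzero Hahn series in R[[G]] with grid-based supports. Assume μ witnesses S (i.e., supp S ⊆ (mag S)·μ*). If A ≺^μ B then A·S ≺^μ B·S, and if A ≼^μ B then A·S ≼^μ B·S. (Key point: (mag B)(mag S) ∈ supp(B·S) because there can be no cancellation at that monomial, using the witness hypothesis.) -/

import Mathlib

/- Additive convention: magnitude of a Hahn series is `HahnSeries.order` (least exponent);
a monomial is small iff its exponent is positive; a ratio set is a finite set of
positive exponents. -/

/-- `μ⁺`: finite nonempty sums of elements of `s`. -/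
def addPlus {Γ : Type*} [AddCommMonoid Γ] (s : Set Γ) : Set Γ :=
  {x | ∃ a ∈ s, ∃ b ∈ AddSubmonoid.closure s, x = a + b}

/-- `A ≺^μ B`. -/
def hPrec {Γ : Type*} [AddCommGroup Γ] [LinearOrder Γ] [IsOrderedAddMonoid Γ] (μ : Set Γ)
    (A B : HahnSeries Γ ℝ) : Prop :=
  ∀ a ∈ A.support, ∃ b ∈ B.support, ∃ p ∈ addPlus μ, a = b + p

/-- `A ≼^μ B`. -/
def hPrecEq {Γ : Type*} [AddCommGroup Γ] [LinearOrder Γ] [IsOrderedAddMonoid Γ] (μ : Set Γ)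
    (A B : HahnSeries Γ ℝ) : Prop :=
  ∀ a ∈ A.support, ∃ b ∈ B.support, ∃ p ∈ AddSubmonoid.closure μ, a = b + p

/-- `μ` witnesses `S`: `supp S ⊆ mag S + μ*`. -/
def hWitnesses {Γ : Type*} [AddCommGroup Γ] [LinearOrder Γ] [IsOrderedAddMonoid Γ] (μ : Set Γ)
    (S : HahnSeries Γ ℝ) : Prop :=
  ∀ a ∈ S.support, ∃ p ∈ AddSubmonoid.closure μ, a = S.order + p

lemma closure_nonneg' {Γ : Type*} [AddCommGroup Γ] [LinearOrder Γ] [IsOrderedAddMonoid Γ] (μ : Finset Γ)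
    (hμ : ∀ x ∈ μ, 0 < x) {q : Γ} (hq : q ∈ AddSubmonoid.closure (μ : Set Γ)) : 0 ≤ q := by
  induction hq using AddSubmonoid.closure_induction with
  | mem x hx => exact (hμ x hx).le
  | zero => exact le_refl 0
  | add _ _ _ _ h1 h2 => exact add_nonneg h1 h2

/-- Key: for `b ∈ supp B`, there is `c ∈ supp (B*S)` with `b + S.order ∈ c + μ*`. -/
lemma key_aux {Γ : Type*} [AddCommGroup Γ] [LinearOrder Γ] [IsOrderedAddMonoid Γ] (μ : Finset Γ)
    (hμ : ∀ x ∈ μ, 0 < x) (B S : HahnSeries Γ ℝ) (hS : S ≠ 0)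
    (hwit : hWitnesses (μ : Set Γ) S) {b : Γ} (hb : b ∈ B.support) :
    ∃ c ∈ (B * S).support, ∃ r ∈ AddSubmonoid.closure (μ : Set Γ),
      b + S.order = c + r := by
  set M := AddSubmonoid.closure (μ : Set Γ) with hM
  set C : Set Γ := {b' ∈ B.support | b - b' ∈ M} with hC
  have hCsub : C ⊆ B.support := fun x hx => hx.1
  have hCne : C.Nonempty := ⟨b, hb, by simp only [sub_self]; exact M.zero_mem⟩
  have hwf : C.IsWF := (B.isPWO_support.isWF).mono hCsub
  set b' := hwf.min hCne with hb'
  have hb'C : b' ∈ C := hwf.min_mem hCne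
  have huniq : ∀ x ∈ B.support, ∀ y ∈ S.support, x + y = b' + S.order →
      x = b' ∧ y = S.order := by
    intro x hx y hy hxy
    obtain ⟨q, hqM, rfl⟩ := hwit y hy
    have hq0 : 0 ≤ q := closure_nonneg' μ hμ hqM
    rcases eq_or_lt_of_le hq0 with h0 | h0
    · constructor
      · have : x + (S.order + q) = b' + S.order := hxy
        rw [← h0, add_zero] at this
        exact add_right_cancel this
      · rw [← h0, add_zero]
    · exfalso
      have hxb' : x = b' - q := by
        have : x + q + S.order = b' + S.order := by
          rw [← hxy]; abel
        have h2 := add_right_cancel this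
        rw [← h2]; abel
      have hxlt : x < b' := by rw [hxb']; exact sub_lt_self _ h0
      have hxC : x ∈ C := by
        refine ⟨hx, ?_⟩
        have : b - x = (b - b') + q := by rw [hxb']; abel
        rw [this]
        exact M.add_mem hb'C.2 hqM
      exact hwf.not_lt_min hCne hxC hxlt
  have hcoeff : (B * S).coeff (b' + S.order) ≠ 0 := by
    rw [HahnSeries.coeff_mul]
    have hsingle : Finset.antidiagonal B.isPWO_support S.isPWO_support (b' + S.order)
        = {(b', S.order)} := by
      ext ⟨x, y⟩
      simp only [Finset.mem_addAntidiagonal, Finset.mem_singleton, Prod.mk.injEq]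
      constructor
      · rintro ⟨hx, hy, hxy⟩
        exact huniq x hx y hy hxy
      · rintro ⟨rfl, rfl⟩
        exact ⟨hb'C.1, HahnSeries.coeff_order_eq_zero.not.mpr hS, rfl⟩
    rw [hsingle, Finset.sum_singleton]
    exact mul_ne_zero hb'C.1 (HahnSeries.coeff_order_eq_zero.not.mpr hS)
  refine ⟨b' + S.order, hcoeff, b - b', hb'C.2, by abel⟩

/-- If `μ` witnesses `S`, then `A ≺^μ B` implies `A·S ≺^μ B·S`, and
`A ≼^μ B` implies `A·S ≼^μ B·S`. -/
theorem stmt16 {Γ : Type*} [AddCommGroup Γ] [LinearOrder Γ] [IsOrderedAddMonoid Γ]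
    (μ : Finset Γ) (hμ : ∀ x ∈ μ, 0 < x)
    (A B S : HahnSeries Γ ℝ) (hA : A ≠ 0) (hB : B ≠ 0) (hS : S ≠ 0)
    (hwit : hWitnesses (μ : Set Γ) S) :
    (hPrec (μ : Set Γ) A B → hPrec (μ : Set Γ) (A * S) (B * S)) ∧
    (hPrecEq (μ : Set Γ) A B → hPrecEq (μ : Set Γ) (A * S) (B * S)) := by
  constructor
  · intro h a ha
    obtain ⟨a', ha', s, hs, hsum⟩ := Set.mem_add.1
      (HahnSeries.support_mul_subset ha)
    obtain ⟨b, hb, p, ⟨m, hm, t, ht, hpt⟩, hap⟩ := h a' ha'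
    obtain ⟨q, hq, hsq⟩ := hwit s hs
    obtain ⟨c, hc, r, hr, hbr⟩ := key_aux μ hμ B S hS hwit hb
    refine ⟨c, hc, m + (t + r + q), ⟨m, hm, t + r + q,
      (AddSubmonoid.closure (μ : Set Γ)).add_mem ((AddSubmonoid.closure (μ : Set Γ)).add_mem ht hr) hq,
      rfl⟩, ?_⟩
    rw [← hsum, hap, hpt, hsq]
    rw [show b + (m + t) + (S.order + q) = (b + S.order) + (m + (t + q)) by abel, hbr]
    abel
  · intro h a ha
    obtain ⟨a', ha', s, hs, hsum⟩ := Set.mem_add.1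
      (HahnSeries.support_mul_subset ha)
    obtain ⟨b, hb, p, hp, hap⟩ := h a' ha'
    obtain ⟨q, hq, hsq⟩ := hwit s hs
    obtain ⟨c, hc, r, hr, hbr⟩ := key_aux μ hμ B S hS hwit hb
    refine ⟨c, hc, p + r + q,
      (AddSubmonoid.closure (μ : Set Γ)).add_mem
        ((AddSubmonoid.closure (μ : Set Γ)).add_mem hp hr) hq, ?_⟩
    rw [← hsum, hap, hsq]
    rw [show b + p + (S.order + q) = (b + S.order) + (p + q) by abel, hbr]
    abel
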